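/- Assume A is symmetric positive definite, B is injective (B·u = 0 implies u = 0), and the combined injectivity condition holds: B·u + C·λ = 0 implies u = 0 and λ = 0. Define S := Cᵀ·A⁻¹·C − Cᵀ·A⁻¹·B·(Bᵀ·A⁻¹·B)⁻¹·Bᵀ·A⁻¹·C and R̂ := Cᵀ·A⁻¹·G − Cᵀ·A⁻¹·B·(Bᵀ·A⁻¹·B)⁻¹·(Bᵀ·A⁻¹·G − F). Set λ := S⁻¹·R̂, u := (Bᵀ·A⁻¹·B)⁻¹·(Bᵀ·A⁻¹·G − F − Bᵀ·A⁻¹·C·λ), and σ := A⁻¹·(G − B·u − C·λ). Then (σ, u, λ) is the unique solution of the hybrid system A·σ + B·u + C·λ = G, Bᵀ·σ = F, Cᵀ·σ = 0. -/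

import Mathlib

open Matrix

private lemma hyb_dp {k l : ℕ} (M : Matrix (Fin k) (Fin l) ℝ) (x : Fin k → ℝ) (y : Fin l → ℝ) :
    x ⬝ᵥ M *ᵥ y = (Mᵀ *ᵥ x) ⬝ᵥ y := by
  rw [Matrix.dotProduct_mulVec, Matrix.mulVec_transpose]

private lemma hyb_posDef {k : ℕ} {M : Matrix (Fin k) (Fin k) ℝ} (hsymm : Mᵀ = M)
    (hpos : ∀ x, x ≠ 0 → 0 < x ⬝ᵥ M *ᵥ x) : M.PosDef := by
  refine Matrix.PosDef.of_dotProduct_mulVec_pos ?_ (fun x hx => by simpa using hpos x hx)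
  ext i j
  simpa [Matrix.conjTranspose_apply] using congrFun (congrFun hsymm i) j

theorem hybridization_algorithm_correct (n m p : ℕ)
    (A : Matrix (Fin n) (Fin n) ℝ) (B : Matrix (Fin n) (Fin m) ℝ)
    (C : Matrix (Fin n) (Fin p) ℝ) (G : Fin n → ℝ) (F : Fin m → ℝ)
    (hAsymm : Aᵀ = A)
    (hApos : ∀ x : Fin n → ℝ, x ≠ 0 → 0 < x ⬝ᵥ (A *ᵥ x))
    (hB : ∀ u : Fin m → ℝ, B *ᵥ u = 0 → u = 0)
    (hBC : ∀ (u : Fin m → ℝ) (lam : Fin p → ℝ),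
      B *ᵥ u + C *ᵥ lam = 0 → u = 0 ∧ lam = 0)
    (S : Matrix (Fin p) (Fin p) ℝ) (Rhat : Fin p → ℝ)
    (hS : S = Cᵀ * A⁻¹ * C - Cᵀ * A⁻¹ * B * (Bᵀ * A⁻¹ * B)⁻¹ * (Bᵀ * A⁻¹ * C))
    (hRhat : Rhat = (Cᵀ * A⁻¹) *ᵥ G -
      (Cᵀ * A⁻¹ * B * (Bᵀ * A⁻¹ * B)⁻¹) *ᵥ ((Bᵀ * A⁻¹) *ᵥ G - F))
    (lam : Fin p → ℝ) (u : Fin m → ℝ) (σ : Fin n → ℝ)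
    (hlam : lam = S⁻¹ *ᵥ Rhat)
    (hu : u = (Bᵀ * A⁻¹ * B)⁻¹ *ᵥ ((Bᵀ * A⁻¹) *ᵥ G - F - (Bᵀ * A⁻¹ * C) *ᵥ lam))
    (hσ : σ = A⁻¹ *ᵥ (G - B *ᵥ u - C *ᵥ lam)) :
    (A *ᵥ σ + B *ᵥ u + C *ᵥ lam = G ∧ Bᵀ *ᵥ σ = F ∧ Cᵀ *ᵥ σ = 0) ∧
    (∀ (σ' : Fin n → ℝ) (u' : Fin m → ℝ) (lam' : Fin p → ℝ),
      A *ᵥ σ' + B *ᵥ u' + C *ᵥ lam' = G → Bᵀ *ᵥ σ' = F → Cᵀ *ᵥ σ' = 0 →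
      σ' = σ ∧ u' = u ∧ lam' = lam) := by
  -- A is positive definite, hence invertible
  have hApd : A.PosDef := hyb_posDef hAsymm hApos
  have hAdet : IsUnit A.det := (Matrix.isUnit_iff_isUnit_det A).mp hApd.isUnit
  have hAAinv : A * A⁻¹ = 1 := Matrix.mul_nonsing_inv A hAdet
  have hA1pd : (A⁻¹).PosDef := hApd.inv
  have hA1symm : (A⁻¹)ᵀ = A⁻¹ := by
    rw [Matrix.transpose_nonsing_inv, hAsymm]
  have hA1pos : ∀ x : Fin n → ℝ, x ≠ 0 → 0 < x ⬝ᵥ (A⁻¹ *ᵥ x) := by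
    intro x hx
    simpa using hA1pd.dotProduct_mulVec_pos hx
  -- M := Bᵀ A⁻¹ B is positive definite, hence invertible
  have hMsymm : (Bᵀ * A⁻¹ * B)ᵀ = Bᵀ * A⁻¹ * B := by
    simp [Matrix.transpose_mul, hA1symm, Matrix.mul_assoc]
  have hMpos : ∀ x : Fin m → ℝ, x ≠ 0 → 0 < x ⬝ᵥ ((Bᵀ * A⁻¹ * B) *ᵥ x) := by
    intro x hx
    have hBx : B *ᵥ x ≠ 0 := fun h => hx (hB x h)
    have key : x ⬝ᵥ ((Bᵀ * A⁻¹ * B) *ᵥ x) = (B *ᵥ x) ⬝ᵥ (A⁻¹ *ᵥ (B *ᵥ x)) := by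
      rw [← Matrix.mulVec_mulVec, ← Matrix.mulVec_mulVec, hyb_dp, Matrix.transpose_transpose]
    rw [key]
    exact hA1pos _ hBx
  have hMpd : (Bᵀ * A⁻¹ * B).PosDef := hyb_posDef hMsymm hMpos
  have hMdet : IsUnit (Bᵀ * A⁻¹ * B).det :=
    (Matrix.isUnit_iff_isUnit_det _).mp hMpd.isUnit
  have hMMinv : (Bᵀ * A⁻¹ * B) * (Bᵀ * A⁻¹ * B)⁻¹ = 1 := Matrix.mul_nonsing_inv _ hMdet
  have hM1 : ∀ v : Fin m → ℝ,
      Bᵀ *ᵥ (A⁻¹ *ᵥ (B *ᵥ ((Bᵀ * A⁻¹ * B)⁻¹ *ᵥ v))) = v := by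
    intro v
    rw [Matrix.mulVec_mulVec, Matrix.mulVec_mulVec, Matrix.mulVec_mulVec,
      hMMinv, Matrix.one_mulVec]
  -- S is positive definite, hence invertible
  have hSsymm : Sᵀ = S := by
    subst hS
    simp [Matrix.transpose_mul, Matrix.transpose_nonsing_inv, hA1symm, hMsymm,
      Matrix.mul_assoc]
  have hSpos : ∀ x : Fin p → ℝ, x ≠ 0 → 0 < x ⬝ᵥ (S *ᵥ x) := by
    intro x hx
    set y : Fin m → ℝ := (Bᵀ * A⁻¹ * C) *ᵥ x with hy
    set u0 : Fin m → ℝ := (Bᵀ * A⁻¹ * B)⁻¹ *ᵥ y with hu0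
    set z : Fin n → ℝ := C *ᵥ x - B *ᵥ u0 with hz
    have hzne : z ≠ 0 := by
      intro h
      apply hx
      refine (hBC (-u0) x ?_).2
      rw [Matrix.mulVec_neg]
      rw [hz, sub_eq_zero] at h
      rw [h]
      abel
    -- key dot product computations
    have e1 : (C *ᵥ x) ⬝ᵥ (A⁻¹ *ᵥ (B *ᵥ u0)) = y ⬝ᵥ u0 := by
      rw [hyb_dp (A⁻¹), hA1symm, hyb_dp B, hy, Matrix.mulVec_mulVec, Matrix.mulVec_mulVec]
    have e2 : (B *ᵥ u0) ⬝ᵥ (A⁻¹ *ᵥ (C *ᵥ x)) = y ⬝ᵥ u0 := by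
      rw [dotProduct_comm, hyb_dp B, hy, Matrix.mulVec_mulVec, Matrix.mulVec_mulVec]
    have e3 : (B *ᵥ u0) ⬝ᵥ (A⁻¹ *ᵥ (B *ᵥ u0)) = y ⬝ᵥ u0 := by
      rw [hyb_dp (A⁻¹), hA1symm, hyb_dp B, hu0, hM1]
    have hSx2 : (Cᵀ * A⁻¹ * B * (Bᵀ * A⁻¹ * B)⁻¹ * (Bᵀ * A⁻¹ * C)) *ᵥ x
        = Cᵀ *ᵥ (A⁻¹ *ᵥ (B *ᵥ u0)) := by
      rw [hu0, hy, Matrix.mulVec_mulVec, Matrix.mulVec_mulVec, Matrix.mulVec_mulVec]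
      simp [Matrix.mul_assoc]
    have t1 : x ⬝ᵥ ((Cᵀ * A⁻¹ * C) *ᵥ x) = (C *ᵥ x) ⬝ᵥ (A⁻¹ *ᵥ (C *ᵥ x)) := by
      rw [← Matrix.mulVec_mulVec, ← Matrix.mulVec_mulVec, hyb_dp Cᵀ,
        Matrix.transpose_transpose]
    have t2 : x ⬝ᵥ (Cᵀ *ᵥ (A⁻¹ *ᵥ (B *ᵥ u0))) = y ⬝ᵥ u0 := by
      rw [hyb_dp Cᵀ, Matrix.transpose_transpose, e1]
    have e0 : x ⬝ᵥ (S *ᵥ x) = (C *ᵥ x) ⬝ᵥ (A⁻¹ *ᵥ (C *ᵥ x)) - y ⬝ᵥ u0 := by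
      rw [hS, Matrix.sub_mulVec, dotProduct_sub, hSx2, t1, t2]
    have ez : z ⬝ᵥ (A⁻¹ *ᵥ z) = (C *ᵥ x) ⬝ᵥ (A⁻¹ *ᵥ (C *ᵥ x)) - y ⬝ᵥ u0 := by
      rw [hz]
      simp only [Matrix.mulVec_sub, dotProduct_sub, sub_dotProduct,
        e1, e2, e3]
      ring
    rw [e0, ← ez]
    exact hA1pos z hzne
  have hSpd : S.PosDef := hyb_posDef hSsymm hSpos
  have hSdet : IsUnit S.det := (Matrix.isUnit_iff_isUnit_det _).mp hSpd.isUnit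
  have hSlam : S *ᵥ lam = Rhat := by
    rw [hlam, Matrix.mulVec_mulVec, Matrix.mul_nonsing_inv _ hSdet, Matrix.one_mulVec]
  -- the three equations
  have hA1 : ∀ v : Fin n → ℝ, A *ᵥ (A⁻¹ *ᵥ v) = v := by
    intro v
    rw [Matrix.mulVec_mulVec, hAAinv, Matrix.one_mulVec]
  have eq1 : A *ᵥ σ + B *ᵥ u + C *ᵥ lam = G := by
    rw [hσ, hA1]
    abel
  have hMu : (Bᵀ * A⁻¹) *ᵥ (B *ᵥ u) = (Bᵀ * A⁻¹) *ᵥ G - F - (Bᵀ * A⁻¹ * C) *ᵥ lam := by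
    rw [hu, ← Matrix.mulVec_mulVec, hM1]
  have eq2 : Bᵀ *ᵥ σ = F := by
    rw [hσ, Matrix.mulVec_mulVec, Matrix.mulVec_sub, Matrix.mulVec_sub, hMu,
      Matrix.mulVec_mulVec lam (Bᵀ * A⁻¹) C]
    abel
  have eq3 : Cᵀ *ᵥ σ = 0 := by
    have expand : Cᵀ *ᵥ σ = Rhat - S *ᵥ lam := by
      rw [hσ, Matrix.mulVec_mulVec, Matrix.mulVec_sub, Matrix.mulVec_sub, hRhat, hS,
        Matrix.sub_mulVec]
      rw [hu]
      rw [show (Cᵀ * A⁻¹) *ᵥ (B *ᵥ ((Bᵀ * A⁻¹ * B)⁻¹ *ᵥ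
          ((Bᵀ * A⁻¹) *ᵥ G - F - (Bᵀ * A⁻¹ * C) *ᵥ lam)))
          = (Cᵀ * A⁻¹ * B * (Bᵀ * A⁻¹ * B)⁻¹) *ᵥ
            ((Bᵀ * A⁻¹) *ᵥ G - F - (Bᵀ * A⁻¹ * C) *ᵥ lam) by
        rw [Matrix.mulVec_mulVec, Matrix.mulVec_mulVec, Matrix.mul_assoc,
          Matrix.mul_assoc, Matrix.mul_assoc]]
      rw [Matrix.mulVec_sub (Cᵀ * A⁻¹ * B * (Bᵀ * A⁻¹ * B)⁻¹)]
      rw [show (Cᵀ * A⁻¹ * B * (Bᵀ * A⁻¹ * B)⁻¹) *ᵥ ((Bᵀ * A⁻¹ * C) *ᵥ lam)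
          = (Cᵀ * A⁻¹ * B * (Bᵀ * A⁻¹ * B)⁻¹ * (Bᵀ * A⁻¹ * C)) *ᵥ lam from
        Matrix.mulVec_mulVec ..]
      rw [Matrix.mulVec_mulVec lam (Cᵀ * A⁻¹) C]
      abel
    rw [expand, hSlam, sub_self]
  refine ⟨⟨eq1, eq2, eq3⟩, ?_⟩
  intro σ' u' lam' h1 h2 h3
  set dσ := σ' - σ with hdσ
  set du := u' - u with hdu
  set dl := lam' - lam with hdl
  have g1 : A *ᵥ dσ + B *ᵥ du + C *ᵥ dl = 0 := by
    rw [hdσ, hdu, hdl, Matrix.mulVec_sub, Matrix.mulVec_sub, Matrix.mulVec_sub]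
    rw [show A *ᵥ σ' - A *ᵥ σ + (B *ᵥ u' - B *ᵥ u) + (C *ᵥ lam' - C *ᵥ lam)
        = (A *ᵥ σ' + B *ᵥ u' + C *ᵥ lam') - (A *ᵥ σ + B *ᵥ u + C *ᵥ lam) by abel]
    rw [h1, eq1, sub_self]
  have g2 : Bᵀ *ᵥ dσ = 0 := by
    rw [hdσ, Matrix.mulVec_sub, h2, eq2, sub_self]
  have g3 : Cᵀ *ᵥ dσ = 0 := by
    rw [hdσ, Matrix.mulVec_sub, h3, eq3, sub_self]
  have hquad : dσ ⬝ᵥ (A *ᵥ dσ) = 0 := by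
    have : dσ ⬝ᵥ (A *ᵥ dσ + B *ᵥ du + C *ᵥ dl) = 0 := by rw [g1, dotProduct_zero]
    rw [dotProduct_add, dotProduct_add, hyb_dp B, hyb_dp C, g2, g3,
      zero_dotProduct, zero_dotProduct, add_zero, add_zero] at this
    exact this
  have hdσ0 : dσ = 0 := by
    by_contra hne
    exact absurd hquad (hApos dσ hne).ne'
  have hBC0 : B *ᵥ du + C *ᵥ dl = 0 := by
    have := g1
    rw [hdσ0, Matrix.mulVec_zero, zero_add] at this
    exact this
  obtain ⟨hdu0, hdl0⟩ := hBC du dl hBC0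
  refine ⟨sub_eq_zero.mp hdσ0, sub_eq_zero.mp hdu0, sub_eq_zero.mp hdl0⟩
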